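/- Let Â^(1),...,Â^(R) be L×L matrices with nonnegative entries whose average Â* = (1/R)∑_r Â^(r) is row-wise strictly diagonally dominant (Â*_ii > Â*_ij for j ≠ i), let P be column-stochastic, and set A^(r) = Â^(r) P. Then trace((1/R)∑_r A^(r)) ≤ trace(Â*). -/
import Mathlib


theorem stmt_6 {L R : ℕ} (hR : 0 < R)
    (Ahat : Fin R → Matrix (Fin L) (Fin L) ℝ) (P : Matrix (Fin L) (Fin L) ℝ)
    (hAhat : ∀ r i j, 0 ≤ Ahat r i j)
    (hPnn : ∀ i j, 0 ≤ P i j) (hPs : ∀ i, ∑ j, P j i = 1)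
    (hDD : ∀ i j, j ≠ i →
      ((R : ℝ)⁻¹ • ∑ r, Ahat r) i j < ((R : ℝ)⁻¹ • ∑ r, Ahat r) i i)
    (A : Fin R → Matrix (Fin L) (Fin L) ℝ) (hA : ∀ r, A r = Ahat r * P) :
    Matrix.trace ((R : ℝ)⁻¹ • ∑ r, A r)
      ≤ Matrix.trace ((R : ℝ)⁻¹ • ∑ r, Ahat r) := by
  set B : Matrix (Fin L) (Fin L) ℝ := (R : ℝ)⁻¹ • ∑ r, Ahat r with hB
  have hBle : ∀ i k, B i k ≤ B i i := by
    intro i k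
    rcases eq_or_ne k i with rfl | h
    · exact le_refl _
    · exact (hDD i k h).le
  have hsum : (R : ℝ)⁻¹ • ∑ r, A r = B * P := by
    simp only [hA, hB, Matrix.smul_mul, ← Matrix.sum_mul]
  rw [hsum]
  have : Matrix.trace (B * P) = ∑ i, ∑ k, B i k * P k i := by
    simp [Matrix.trace, Matrix.diag, Matrix.mul_apply]
  rw [this]
  have htr : Matrix.trace B = ∑ i, B i i := rfl
  rw [htr]
  apply Finset.sum_le_sum
  intro i _
  calc ∑ k, B i k * P k i ≤ ∑ k, B i i * P k i := by
        apply Finset.sum_le_sum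
        intro k _
        exact mul_le_mul_of_nonneg_right (hBle i k) (hPnn k i)
    _ = B i i := by rw [← Finset.mul_sum, hPs i, mul_one]
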